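/- Let n ≥ 2 be an integer and define Δ_u = Σ_{j=1}^{n} (n^j + n^{j+1})·(j + 1 + n^{−j}). Let S ⊆ {1,…,n} with |S| = k, let c : {1,…,n} \ S → ℝ satisfy c(j) ∈ {j + 1, j + 1 + n^{−j}} for each j ∉ S, and put g = Σ_{j ∈ S} (n^j + n^{j+1})·(j + 1) + Σ_{j ∉ S} ( n^{j+1}·(j + 1 + n^{−j}) + n^j·c(j) ). Then ⌊(Δ_u − g)/(n + 1)⌋ = k. -/

import Mathlib

/-- Conclusion of Lemma 1 of the NP-hardness reduction: the number `k` of unsatisfied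
clauses can be recovered from the GGI value `g` as `⌊(Δu − g)/(n+1)⌋`. -/
theorem lemma1_floor (n : ℕ) (hn : 2 ≤ n) (S : Finset ℕ) (hS : S ⊆ Finset.Icc 1 n)
    (k : ℕ) (hk : S.card = k) (c : ℕ → ℝ)
    (hc : ∀ j ∈ Finset.Icc 1 n \ S,
      c j = (j : ℝ) + 1 ∨ c j = (j : ℝ) + 1 + ((n : ℝ) ^ j)⁻¹) :
    let Δu : ℝ := ∑ j ∈ Finset.Icc 1 n,
      ((n : ℝ) ^ j + (n : ℝ) ^ (j + 1)) * ((j : ℝ) + 1 + ((n : ℝ) ^ j)⁻¹)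
    let g : ℝ := (∑ j ∈ S, ((n : ℝ) ^ j + (n : ℝ) ^ (j + 1)) * ((j : ℝ) + 1))
      + ∑ j ∈ Finset.Icc 1 n \ S,
          ((n : ℝ) ^ (j + 1) * ((j : ℝ) + 1 + ((n : ℝ) ^ j)⁻¹) + (n : ℝ) ^ j * c j)
    ⌊(Δu - g) / ((n : ℝ) + 1)⌋ = (k : ℤ) := by
  intro Δu g
  have hnR : (2:ℝ) ≤ (n:ℝ) := by exact_mod_cast hn
  have hn0 : (0:ℝ) < n := by linarith
  have hpow : ∀ j : ℕ, ((n:ℝ)^j) ≠ 0 := fun j => pow_ne_zero j (ne_of_gt hn0)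
  set A : ℕ → ℝ := fun j => ((n : ℝ) ^ j + (n : ℝ) ^ (j + 1)) * ((j : ℝ) + 1 + ((n : ℝ) ^ j)⁻¹)
    with hA
  have hsplit : Δu = (∑ j ∈ Finset.Icc 1 n \ S, A j) + ∑ j ∈ S, A j :=
    (Finset.sum_sdiff hS).symm
  set T : ℝ := ∑ j ∈ Finset.Icc 1 n \ S, (if c j = (j:ℝ)+1 then (1:ℝ) else 0) with hT
  have e1 : ∑ j ∈ S, (A j - ((n : ℝ) ^ j + (n : ℝ) ^ (j + 1)) * ((j : ℝ) + 1))
      = (k:ℝ) * ((n:ℝ)+1) := by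
    rw [Finset.sum_congr rfl (fun j _ => show _ = (n:ℝ)+1 by
      rw [hA]
      field_simp
      ring)]
    rw [Finset.sum_const, hk]
    push_cast
    ring
  have e2 : ∑ j ∈ Finset.Icc 1 n \ S,
      (A j - ((n : ℝ) ^ (j + 1) * ((j : ℝ) + 1 + ((n : ℝ) ^ j)⁻¹) + (n : ℝ) ^ j * c j)) = T := by
    apply Finset.sum_congr rfl
    intro j hj
    rcases hc j hj with h | h
    · rw [if_pos h, hA, h]
      field_simp
      ring
    · have hne : c j ≠ (j:ℝ)+1 := by
        rw [h]
        intro habs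
        have : ((n:ℝ)^j)⁻¹ = 0 := by linarith
        exact (inv_ne_zero (hpow j)) this
      rw [if_neg hne, hA, h]
      ring
  have key : Δu - g = (k:ℝ) * ((n:ℝ)+1) + T := by
    rw [hsplit]
    show _ - (_ + _) = _
    rw [← e1, ← e2, Finset.sum_sub_distrib, Finset.sum_sub_distrib]
    ring
  have hT0 : 0 ≤ T := Finset.sum_nonneg fun j _ => by positivity
  have hTcard : T ≤ ((Finset.Icc 1 n \ S).card : ℝ) := by
    rw [hT]
    calc ∑ j ∈ Finset.Icc 1 n \ S, (if c j = (j:ℝ)+1 then (1:ℝ) else 0)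
        ≤ ∑ j ∈ Finset.Icc 1 n \ S, (1:ℝ) :=
          Finset.sum_le_sum fun j _ => by split <;> norm_num
      _ = _ := by simp
  have hcard : ((Finset.Icc 1 n \ S).card : ℝ) ≤ (n:ℝ) := by
    have : (Finset.Icc 1 n \ S).card ≤ (Finset.Icc 1 n).card :=
      Finset.card_le_card (Finset.sdiff_subset)
    have h2 : (Finset.Icc 1 n).card = n := by simp
    exact_mod_cast this.trans_eq h2
  have hTn : T < (n:ℝ) + 1 := by linarith
  have hden : (0:ℝ) < (n:ℝ) + 1 := by linarith
  rw [Int.floor_eq_iff]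
  constructor
  · rw [le_div_iff₀ hden, key]
    push_cast
    nlinarith
  · rw [div_lt_iff₀ hden, key]
    push_cast
    nlinarith
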